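/- Let S ⊆ ℤ² be a finite set such that 0 ∉ S, m ∈ S implies −m ∉ S, and the real linear span of S equals ℝ². Let a, b : S → ℝ² satisfy, for every m ∈ S, ⟨m, a_m⟩ = ⟨m, b_m⟩ = 0 and (a_m, b_m) ≠ (0, 0). Define f : ℝ² → ℝ² by f(x) = Σ_{m ∈ S} (a_m·cos⟨m,x⟩ + b_m·sin⟨m,x⟩). Then the real linear span of {f(x) : x ∈ ℝ²} equals ℝ². -/
import Mathlib


open Set

/-- The integer pairing `⟨m, x⟩ = Σᵢ mᵢ xᵢ` of a lattice vector with a point of `ℝ²`. -/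
def latDot2 (m : Fin 2 → ℤ) (x : Fin 2 → ℝ) : ℝ := ∑ i, (m i : ℝ) * x i

lemma latDot2_add (m : Fin 2 → ℤ) (x y : Fin 2 → ℝ) :
    latDot2 m (x + y) = latDot2 m x + latDot2 m y := by
  simp only [latDot2, Fin.sum_univ_two, Pi.add_apply]
  ring

lemma latDot2_neg (m : Fin 2 → ℤ) (x : Fin 2 → ℝ) :
    latDot2 (-m) x = -latDot2 m x := by
  simp only [latDot2, Fin.sum_univ_two, Pi.neg_apply, Int.cast_neg]
  ring

lemma latDot2_single (m : Fin 2 → ℤ) (j : Fin 2) (t : ℝ) :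
    latDot2 m (Pi.single j t) = (m j : ℝ) * t := by
  simp [latDot2, Pi.single_apply, mul_ite, Finset.sum_ite_eq']

noncomputable def chi13 (n : Fin 2 → ℤ) : Multiplicative (Fin 2 → ℝ) →* ℂ where
  toFun x := Complex.exp (Complex.I * (latDot2 n x.toAdd : ℝ))
  map_one' := by simp [latDot2]
  map_mul' x y := by
    show Complex.exp (Complex.I * ((latDot2 n (Multiplicative.toAdd (x * y)) : ℝ))) =
      Complex.exp (Complex.I * (latDot2 n x.toAdd : ℝ)) *
        Complex.exp (Complex.I * (latDot2 n y.toAdd : ℝ))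
    rw [show Multiplicative.toAdd (x * y) = x.toAdd + y.toAdd from rfl, latDot2_add,
      ← Complex.exp_add]
    push_cast
    ring_nf

lemma chi13_injective : Function.Injective chi13 := by
  intro n n' h
  by_contra hne
  obtain ⟨j, hj⟩ : ∃ j, n j ≠ n' j := by
    by_contra hc
    push_neg at hc
    exact hne (funext hc)
  have hk0 : ((n j : ℝ) - n' j) ≠ 0 := by
    have : ((n j : ℝ)) ≠ n' j := by exact_mod_cast hj
    exact sub_ne_zero.mpr this
  set t : ℝ := Real.pi / ((n j : ℝ) - n' j) with ht
  set A : ℝ := (n j : ℝ) * t with hA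
  set B : ℝ := (n' j : ℝ) * t with hB
  have hAB : A = B + Real.pi := by
    rw [hA, hB, ht]
    field_simp
    ring
  have hx := DFunLike.congr_fun h (Multiplicative.ofAdd (Pi.single j t))
  simp only [chi13, MonoidHom.coe_mk, OneHom.coe_mk, toAdd_ofAdd, latDot2_single] at hx
  rw [show ((n j : ℝ) * t) = A from rfl, show ((n' j : ℝ) * t) = B from rfl] at hx
  have key : (Complex.I * (A : ℂ)) = Complex.I * (B : ℂ) + (Real.pi : ℂ) * Complex.I := by
    rw [hAB]
    push_cast
    ring
  rw [key, Complex.exp_add, Complex.exp_pi_mul_I] at hx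
  refine Complex.exp_ne_zero (Complex.I * (B : ℂ)) ?_
  linear_combination -hx/2

/-- For a divergence-free trigonometric vector field on `𝕋²` whose modes span `ℝ²`,
the values span `ℝ²`. -/
theorem stmt_13 (S : Finset (Fin 2 → ℤ))
    (h0 : (0 : Fin 2 → ℤ) ∉ S) (hsym : ∀ m ∈ S, -m ∉ S)
    (hspan : Submodule.span ℝ ((fun m : Fin 2 → ℤ => fun i => (m i : ℝ)) '' S) = ⊤)
    (a b : (Fin 2 → ℤ) → (Fin 2 → ℝ))
    (horth : ∀ m ∈ S, (∑ i, (m i : ℝ) * a m i) = 0 ∧ (∑ i, (m i : ℝ) * b m i) = 0)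
    (hne : ∀ m ∈ S, ¬ (a m = 0 ∧ b m = 0)) :
    Submodule.span ℝ
        (Set.range (fun x : Fin 2 → ℝ =>
          ∑ m ∈ S, (Real.cos (latDot2 m x) • a m + Real.sin (latDot2 m x) • b m))) = ⊤ := by
  set f : (Fin 2 → ℝ) → (Fin 2 → ℝ) := fun x =>
    ∑ m ∈ S, (Real.cos (latDot2 m x) • a m + Real.sin (latDot2 m x) • b m) with hf
  by_contra hcon
  have hlt : Submodule.span ℝ (Set.range f) < ⊤ := lt_top_iff_ne_top.mpr hcon
  obtain ⟨φ, hφ0, hφ⟩ := Submodule.exists_dual_map_eq_bot_of_lt_top hlt inferInstance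
  have hφf : ∀ x, φ (f x) = 0 := by
    intro x
    have hmem : φ (f x) ∈ Submodule.map φ (Submodule.span ℝ (Set.range f)) :=
      ⟨f x, Submodule.subset_span (mem_range_self x), rfl⟩
    rw [hφ] at hmem
    simpa using hmem
  set c : (Fin 2 → ℤ) → ℝ := fun m => φ (a m) with hc
  set d : (Fin 2 → ℤ) → ℝ := fun m => φ (b m) with hd
  -- the linear combination vanishing identity
  have hsum : ∀ x : Fin 2 → ℝ,
      ∑ m ∈ S, (Real.cos (latDot2 m x) * c m + Real.sin (latDot2 m x) * d m) = 0 := by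
    intro x
    have := hφf x
    rw [hf] at this
    simpa [map_sum, map_add, map_smul, smul_eq_mul] using this
  -- key claim: all c m, d m vanish
  have hcd : ∀ m ∈ S, c m = 0 ∧ d m = 0 := by
    have hLI : LinearIndependent ℂ (fun n : Fin 2 → ℤ =>
        ((chi13 n : Multiplicative (Fin 2 → ℝ) → ℂ))) :=
      (linearIndependent_monoidHom (Multiplicative (Fin 2 → ℝ)) ℂ).comp chi13 chi13_injective
    set g : (Fin 2 → ℤ) → ℂ := fun n =>
      (if n ∈ S then ((c n : ℂ) - Complex.I * d n) / 2 else 0) +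
      (if -n ∈ S then ((c (-n) : ℂ) + Complex.I * d (-n)) / 2 else 0) with hg
    set T : Finset (Fin 2 → ℤ) := S ∪ S.image (fun m => -m) with hT
    have hdisj : Disjoint S (S.image (fun m => -m)) := by
      rw [Finset.disjoint_left]
      intro m hm hm'
      obtain ⟨m', hm2, rfl⟩ := Finset.mem_image.mp hm'
      exact hsym m' hm2 hm
    have hgm : ∀ m ∈ S, g m = ((c m : ℂ) - Complex.I * d m) / 2 := by
      intro m hm
      rw [hg]
      simp only [if_pos hm, if_neg (hsym m hm), add_zero]
    have hgneg : ∀ m ∈ S, g (-m) = ((c m : ℂ) + Complex.I * d m) / 2 := by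
      intro m hm
      rw [hg]
      simp only [neg_neg, if_neg (hsym m hm), if_pos hm, zero_add]
    have hzero : ∑ n ∈ T, g n • ((chi13 n : Multiplicative (Fin 2 → ℝ) → ℂ)) = 0 := by
      funext x
      have hexp : ∀ m : Fin 2 → ℤ,
          chi13 m x = Real.cos (latDot2 m x.toAdd) + Real.sin (latDot2 m x.toAdd) * Complex.I := by
        intro m
        show Complex.exp (Complex.I * (latDot2 m x.toAdd : ℝ)) = _
        rw [mul_comm, Complex.exp_mul_I, Complex.ofReal_cos, Complex.ofReal_sin]
      simp only [Finset.sum_apply, Pi.smul_apply, smul_eq_mul, Pi.zero_apply, hT]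
      rw [Finset.sum_union hdisj, Finset.sum_image (fun m _ m' _ h => neg_injective h)]
      have : ∀ m ∈ S, g m * chi13 m x + g (-m) * chi13 (-m) x =
          ((Real.cos (latDot2 m x.toAdd) * c m + Real.sin (latDot2 m x.toAdd) * d m : ℝ) : ℂ) := by
        intro m hm
        rw [hgm m hm, hgneg m hm, hexp m, hexp (-m), latDot2_neg]
        push_cast
        ring_nf
        simp only [Complex.cos_neg, Complex.sin_neg]
        ring_nf
        rw [Complex.I_sq]
        ring
      rw [← Finset.sum_add_distrib, Finset.sum_congr rfl this, ← Complex.ofReal_sum,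
        hsum x.toAdd]
      simp
    have hall := linearIndependent_iff'.mp hLI T g hzero
    intro m hm
    have h1 : g m = 0 := hall m (Finset.mem_union_left _ hm)
    have h2 : g (-m) = 0 := hall (-m)
      (Finset.mem_union_right _ (Finset.mem_image_of_mem _ hm))
    rw [hgm m hm] at h1
    rw [hgneg m hm] at h2
    have hcm : (c m : ℂ) = 0 := by linear_combination h1 + h2
    have hdm : (d m : ℂ) = 0 := by
      have : Complex.I * (d m : ℂ) = 0 := by linear_combination h2 - h1
      simpa [Complex.I_ne_zero] using this
    exact ⟨by exact_mod_cast hcm, by exact_mod_cast hdm⟩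
  -- translate φ into the vector u
  set u : Fin 2 → ℝ := fun i => φ (Pi.single i 1) with hu
  have hφv : ∀ v : Fin 2 → ℝ, φ v = v 0 * u 0 + v 1 * u 1 := by
    intro v
    have hv : v = v 0 • (Pi.single 0 1 : Fin 2 → ℝ) + v 1 • (Pi.single 1 1 : Fin 2 → ℝ) := by
      funext i
      fin_cases i <;> simp [Pi.single_apply]
    rw [hv, map_add, map_smul, map_smul]
    simp [hu, smul_eq_mul]
  -- find a mode not parallel to u
  obtain ⟨m, hm, hdet⟩ : ∃ m ∈ S, (m 0 : ℝ) * u 1 - (m 1 : ℝ) * u 0 ≠ 0 := by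
    by_contra hall
    push_neg at hall
    set ψ : (Fin 2 → ℝ) →ₗ[ℝ] ℝ :=
      u 1 • (LinearMap.proj 0 : (Fin 2 → ℝ) →ₗ[ℝ] ℝ) - u 0 • LinearMap.proj 1 with hψ
    have hker : ((fun m : Fin 2 → ℤ => fun i => (m i : ℝ)) '' S) ⊆ (LinearMap.ker ψ : Set (Fin 2 → ℝ)) := by
      rintro v ⟨m, hmS, rfl⟩
      have := hall m hmS
      simp only [SetLike.mem_coe, LinearMap.mem_ker, hψ, LinearMap.sub_apply,
        LinearMap.smul_apply, LinearMap.proj_apply, smul_eq_mul]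
      linarith [this]
    have htop : (⊤ : Submodule ℝ (Fin 2 → ℝ)) ≤ LinearMap.ker ψ := by
      rw [← hspan]
      exact Submodule.span_le.mpr hker
    have hψ0 : ∀ v, ψ v = 0 := fun v => LinearMap.mem_ker.mp (htop Submodule.mem_top)
    have hu1 : u 1 = 0 := by
      have := hψ0 (Pi.single 0 1 : Fin 2 → ℝ)
      simpa [hψ, Pi.single_apply] using this
    have hu0 : u 0 = 0 := by
      have := hψ0 (Pi.single 1 1 : Fin 2 → ℝ)
      simpa [hψ, Pi.single_apply] using this
    apply hφ0
    apply LinearMap.ext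
    intro v
    rw [hφv v, hu0, hu1]
    simp
  -- now conclude a m = 0 and b m = 0
  obtain ⟨hcm, hdm⟩ := hcd m hm
  obtain ⟨hoa, hob⟩ := horth m hm
  rw [Fin.sum_univ_two] at hoa hob
  have hca : a m 0 * u 0 + a m 1 * u 1 = 0 := by rw [← hφv]; exact hcm
  have hcb : b m 0 * u 0 + b m 1 * u 1 = 0 := by rw [← hφv]; exact hdm
  apply hne m hm
  constructor
  · funext i
    fin_cases i
    · have h : a m 0 * ((m 0 : ℝ) * u 1 - (m 1 : ℝ) * u 0) = 0 := by
        linear_combination u 1 * hoa - (m 1 : ℝ) * hca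
      simpa using (mul_eq_zero.mp h).resolve_right hdet
    · have h : a m 1 * ((m 0 : ℝ) * u 1 - (m 1 : ℝ) * u 0) = 0 := by
        linear_combination (m 0 : ℝ) * hca - u 0 * hoa
      simpa using (mul_eq_zero.mp h).resolve_right hdet
  · funext i
    fin_cases i
    · have h : b m 0 * ((m 0 : ℝ) * u 1 - (m 1 : ℝ) * u 0) = 0 := by
        linear_combination u 1 * hob - (m 1 : ℝ) * hcb
      simpa using (mul_eq_zero.mp h).resolve_right hdet
    · have h : b m 1 * ((m 0 : ℝ) * u 1 - (m 1 : ℝ) * u 0) = 0 := by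
        linear_combination (m 0 : ℝ) * hcb - u 0 * hob
      simpa using (mul_eq_zero.mp h).resolve_right hdet
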